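/- In the setting of the Nummelin split chain: for any n ≥ 1, any measurable nonnegative function G_n : X^n → ℝ, and any measure λ on B(X), ∫_X E_x[G_n(Φ_1,…,Φ_n)] λ(dx) = ∫_{X̌} Ě_{x̌}[G_n(φ̌_1,…,φ̌_n)] λ*(dx̌), where φ̌_j denotes the first (X-valued) component of the split chain Φ̌_j. -/

import Mathlib

open MeasureTheory ProbabilityTheory

variable {X : Type*} [MeasurableSpace X]

/-- The splitting `λ*` of a measure `λ` on `X`:
`λ*(A₀) = (1−δ)λ(A∩C) + λ(A∩Cᶜ)`, `λ*(A₁) = δλ(A∩C)`. -/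
noncomputable def splitMeasure (C : Set X) (δ : ℝ) (μ0 : Measure X) :
    Measure (X × Bool) :=
  Measure.map (fun x => (x, false))
      (ENNReal.ofReal (1 - δ) • μ0.restrict C + μ0.restrict Cᶜ)
    + Measure.map (fun x => (x, true)) (ENNReal.ofReal δ • μ0.restrict C)

open Classical in
/-- The kernel `Q` of the split-chain construction. -/
noncomputable def splitQ (P : Kernel X X) (ν : Measure X) (C : Set X) (δ : ℝ)
    (xs : X × Bool) : Measure X :=
  if xs.2 = true then ν
  else if xs.1 ∈ C then
    (ENNReal.ofReal (1 - δ))⁻¹ • ((P xs.1) - ENNReal.ofReal δ • ν)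
  else P xs.1

/-- The split (Nummelin) transition kernel `P̌(xs,·) = Q(xs,·)*`. -/
noncomputable def splitKernel (P : Kernel X X) (ν : Measure X) (C : Set X)
    (δ : ℝ) (xs : X × Bool) : Measure (X × Bool) :=
  splitMeasure C δ (splitQ P ν C δ xs)

/-- Markov family of path measures for a transition function `K`. -/
def IsMarkovFamilyFun {Y : Type*} [MeasurableSpace Y] (K : Y → Measure Y)
    (Pr : Y → Measure (ℕ → Y)) : Prop :=
  (∀ y, IsProbabilityMeasure (Pr y)) ∧
  (∀ y, Pr y {ω | ω 0 = y} = 1) ∧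
  (∀ y (n : ℕ) (B : Set (Fin (n + 1) → Y)), MeasurableSet B →
    ∀ f : Y → ENNReal, Measurable f →
      ∫⁻ ω in {ω | (fun i : Fin (n + 1) => ω i.1) ∈ B}, f (ω (n + 1)) ∂ Pr y
        = ∫⁻ ω in {ω | (fun i : Fin (n + 1) => ω i.1) ∈ B},
            ∫⁻ z, f z ∂ (K (ω n)) ∂ Pr y)

open scoped ENNReal

namespace NummelinAux

open Classical in
/-- The "bell combination": integrating a function on `X × Bool` against the
splitting weights at a point `y`. -/
noncomputable def bcomb (C : Set X) (δ : ℝ) (F : X × Bool → ℝ≥0∞) (y : X) : ℝ≥0∞ :=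
  if y ∈ C then ENNReal.ofReal (1 - δ) * F (y, false) + ENNReal.ofReal δ * F (y, true)
  else F (y, false)

lemma measurable_bcomb_param {α : Type*} [MeasurableSpace α] {C : Set X}
    (hC : MeasurableSet C) {δ : ℝ} {F : α → X × Bool → ℝ≥0∞}
    (hF : Measurable (Function.uncurry F)) :
    Measurable (fun p : α × X => bcomb C δ (F p.1) p.2) := by
  have h1 : Measurable fun p : α × X => F p.1 (p.2, false) :=
    hF.comp (measurable_fst.prodMk (measurable_snd.prodMk measurable_const))
  have h2 : Measurable fun p : α × X => F p.1 (p.2, true) :=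
    hF.comp (measurable_fst.prodMk (measurable_snd.prodMk measurable_const))
  unfold bcomb
  exact Measurable.ite (measurable_snd hC) ((h1.const_mul _).add (h2.const_mul _)) h1

lemma measurable_bcomb {C : Set X} (hC : MeasurableSet C) {δ : ℝ}
    {F : X × Bool → ℝ≥0∞} (hF : Measurable F) :
    Measurable (bcomb C δ F) := by
  have := measurable_bcomb_param (α := Unit) hC (δ := δ) (F := fun _ => F)
    (hF.comp measurable_snd)
  have h2 : Measurable fun y : X => ((() : Unit), y) := measurable_const.prodMk measurable_id
  exact this.comp h2

lemma bcomb_const {C : Set X} {δ : ℝ} (hδ0 : 0 ≤ δ) (hδ1 : δ ≤ 1) (a : ℝ≥0∞) (y : X) :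
    bcomb C δ (fun _ => a) y = a := by
  unfold bcomb
  split
  · rw [← add_mul, ← ENNReal.ofReal_add (by linarith) hδ0,
      show (1 - δ) + δ = 1 by ring, ENNReal.ofReal_one, one_mul]
  · rfl

/-- Lemma A: integration against a split measure. Valid for arbitrary `δ`. -/
lemma lintegral_splitMeasure {C : Set X} (hC : MeasurableSet C) (δ : ℝ) (μ : Measure X)
    {F : X × Bool → ℝ≥0∞} (hF : Measurable F) :
    ∫⁻ p, F p ∂ splitMeasure C δ μ = ∫⁻ y, bcomb C δ F y ∂ μ := by
  have hf0 : Measurable fun x : X => F (x, false) :=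
    hF.comp (measurable_id.prodMk measurable_const)
  have hf1 : Measurable fun x : X => F (x, true) :=
    hF.comp (measurable_id.prodMk measurable_const)
  have hmf : Measurable fun x : X => (x, false) := measurable_id.prodMk measurable_const
  have hmt : Measurable fun x : X => (x, true) := measurable_id.prodMk measurable_const
  have hR : ∫⁻ y, bcomb C δ F y ∂ μ
      = (∫⁻ y in C, ENNReal.ofReal (1 - δ) * F (y, false)
          + ENNReal.ofReal δ * F (y, true) ∂ μ) + ∫⁻ y in Cᶜ, F (y, false) ∂ μ := by
    rw [← lintegral_add_compl (bcomb C δ F) hC]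
    congr 1
    · exact setLIntegral_congr_fun hC (fun y hy => by
        simp [bcomb, hy])
    · exact setLIntegral_congr_fun hC.compl (fun y hy => by
        simp [bcomb, (by simpa using hy : y ∉ C)])
  rw [hR, splitMeasure, lintegral_add_measure, lintegral_map hF hmf, lintegral_map hF hmt,
    lintegral_add_measure, lintegral_smul_measure, lintegral_smul_measure,
    lintegral_add_left (hf0.const_mul _), lintegral_const_mul _ hf0, lintegral_const_mul _ hf1]
  ring

lemma splitMeasure_univ {C : Set X} (hC : MeasurableSet C) {δ : ℝ}
    (hδ0 : 0 ≤ δ) (hδ1 : δ ≤ 1) (μ : Measure X) :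
    splitMeasure C δ μ Set.univ = μ Set.univ := by
  rw [← lintegral_one, ← lintegral_one,
    lintegral_splitMeasure hC δ μ (F := fun _ => (1 : ℝ≥0∞)) measurable_const]
  exact lintegral_congr fun y => bcomb_const hδ0 hδ1 1 y


section Q

variable {P : Kernel X X} {ν : Measure X} {C : Set X} {δ : ℝ}

instance smul_finite [IsProbabilityMeasure ν] :
    IsFiniteMeasure (ENNReal.ofReal δ • ν) := by
  constructor
  rw [Measure.smul_apply, smul_eq_mul]
  exact ENNReal.mul_lt_top ENNReal.ofReal_lt_top (measure_lt_top ν _)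

lemma ofReal_one_sub_ne_zero (hδ1 : δ < 1) : ENNReal.ofReal (1 - δ) ≠ 0 := by
  simp only [ne_eq, ENNReal.ofReal_eq_zero, not_le]
  linarith

lemma splitQ_true (x : X) : splitQ P ν C δ (x, true) = ν := by simp [splitQ]

lemma splitQ_false_mem {x : X} (hx : x ∈ C) :
    splitQ P ν C δ (x, false) = (ENNReal.ofReal (1 - δ))⁻¹ • ((P x) - ENNReal.ofReal δ • ν) := by
  simp [splitQ, hx]

lemma splitQ_false_not_mem {x : X} (hx : x ∉ C) : splitQ P ν C δ (x, false) = P x := by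
  simp [splitQ, hx]

/-- Lemma C: the bell combination of the kernel `Q` reconstructs `P`. -/
lemma bcomb_lintegral_splitQ [IsProbabilityMeasure ν]
    (hδ0 : 0 < δ) (hδ1 : δ < 1) (hminor : ∀ x ∈ C, ENNReal.ofReal δ • ν ≤ P x)
    (g : X → ℝ≥0∞) (y : X) :
    bcomb C δ (fun p => ∫⁻ z, g z ∂ splitQ P ν C δ p) y = ∫⁻ z, g z ∂ P y := by
  have ha0 : ENNReal.ofReal (1 - δ) ≠ 0 := ofReal_one_sub_ne_zero hδ1
  have hatop : ENNReal.ofReal (1 - δ) ≠ ∞ := ENNReal.ofReal_ne_top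
  unfold bcomb
  by_cases hy : y ∈ C
  · rw [if_pos hy]
    beta_reduce
    rw [splitQ_false_mem hy, splitQ_true, lintegral_smul_measure, smul_eq_mul, ← mul_assoc,
      ENNReal.mul_inv_cancel ha0 hatop, one_mul, ← smul_eq_mul, ← lintegral_smul_measure,
      ← lintegral_add_measure, Measure.sub_add_cancel_of_le (hminor y hy)]
  · rw [if_neg hy]
    beta_reduce
    rw [splitQ_false_not_mem hy]

lemma splitQ_univ [IsMarkovKernel P] [IsProbabilityMeasure ν]
    (hδ0 : 0 < δ) (hδ1 : δ < 1) (hminor : ∀ x ∈ C, ENNReal.ofReal δ • ν ≤ P x)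
    (p : X × Bool) : splitQ P ν C δ p Set.univ = 1 := by
  have ha0 : ENNReal.ofReal (1 - δ) ≠ 0 := ofReal_one_sub_ne_zero hδ1
  have hatop : ENNReal.ofReal (1 - δ) ≠ ∞ := ENNReal.ofReal_ne_top
  obtain ⟨x, b⟩ := p
  cases b
  · by_cases hx : x ∈ C
    · rw [splitQ_false_mem hx, Measure.smul_apply, smul_eq_mul,
        Measure.sub_apply MeasurableSet.univ (hminor x hx), Measure.smul_apply, smul_eq_mul,
        measure_univ, measure_univ, mul_one,
        show (1 : ℝ≥0∞) - ENNReal.ofReal δ = ENNReal.ofReal (1 - δ) by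
          rw [ENNReal.ofReal_sub _ hδ0.le, ENNReal.ofReal_one]]
      exact ENNReal.inv_mul_cancel ha0 hatop
    · rw [splitQ_false_not_mem hx]; exact measure_univ
  · rw [splitQ_true]; exact measure_univ

/-- `splitQ` as a measurable kernel. -/
noncomputable def Kq (P : Kernel X X) (ν : Measure X) (C : Set X) (δ : ℝ)
    (hC : MeasurableSet C) (hminor : ∀ x ∈ C, ENNReal.ofReal δ • ν ≤ P x)
    [IsProbabilityMeasure ν] : Kernel (X × Bool) X where
  toFun := splitQ P ν C δ
  measurable' := by
    classical
    apply Measure.measurable_of_measurable_coe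
    intro A hA
    have he : (fun p : X × Bool => splitQ P ν C δ p A)
        = fun p => if p.2 = true then ν A else
            (if p.1 ∈ C then (ENNReal.ofReal (1 - δ))⁻¹ * (P p.1 A - ENNReal.ofReal δ * ν A)
             else P p.1 A) := by
      funext p
      obtain ⟨x, b⟩ := p
      cases b
      · by_cases hx : x ∈ C
        · simp only [splitQ_false_mem hx, Measure.smul_apply, smul_eq_mul,
            Measure.sub_apply hA (hminor x hx), Measure.smul_apply, smul_eq_mul]
          simp [hx]
        · simp [splitQ_false_not_mem hx, hx]
      · simp [splitQ_true]
    rw [he]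
    have hcond : MeasurableSet {p : X × Bool | p.2 = true} :=
      measurable_snd (measurableSet_singleton true)
    refine Measurable.ite hcond measurable_const ?_
    have hin : Measurable fun x : X =>
        (if x ∈ C then (ENNReal.ofReal (1 - δ))⁻¹ * (P x A - ENNReal.ofReal δ * ν A)
         else P x A) :=
      Measurable.ite hC (((P.measurable_coe hA).sub measurable_const).const_mul _)
        (P.measurable_coe hA)
    exact hin.comp measurable_fst

lemma isMarkovKernel_Kq [IsMarkovKernel P] [IsProbabilityMeasure ν]
    (hC : MeasurableSet C) (hδ0 : 0 < δ) (hδ1 : δ < 1)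
    (hminor : ∀ x ∈ C, ENNReal.ofReal δ • ν ≤ P x) :
    IsMarkovKernel (Kq P ν C δ hC hminor) :=
  ⟨fun p => ⟨splitQ_univ hδ0 hδ1 hminor p⟩⟩

/-- The split kernel as a measurable kernel. -/
noncomputable def Ks (P : Kernel X X) (ν : Measure X) (C : Set X) (δ : ℝ)
    (hC : MeasurableSet C) (hminor : ∀ x ∈ C, ENNReal.ofReal δ • ν ≤ P x)
    [IsMarkovKernel P] [IsProbabilityMeasure ν]
    (hδ0 : 0 < δ) (hδ1 : δ < 1) : Kernel (X × Bool) (X × Bool) where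
  toFun := splitKernel P ν C δ
  measurable' := by
    haveI := isMarkovKernel_Kq hC hδ0 hδ1 hminor
    apply Measure.measurable_of_measurable_coe
    intro S hS
    have he : (fun p : X × Bool => splitKernel P ν C δ p S)
        = fun p => ∫⁻ y, bcomb C δ (S.indicator 1) y ∂ (Kq P ν C δ hC hminor p) := by
      funext p
      rw [show splitKernel P ν C δ p S
          = ∫⁻ z, S.indicator 1 z ∂ splitMeasure C δ (splitQ P ν C δ p) from
          (lintegral_indicator_one hS).symm,
        lintegral_splitMeasure hC δ _ (measurable_one.indicator hS)]
      rfl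
    rw [he]
    exact Measurable.lintegral_kernel_prod_right
      (f := fun (_ : X × Bool) y => bcomb C δ (S.indicator 1) y)
      ((measurable_bcomb hC (measurable_one.indicator hS)).comp measurable_snd)

lemma isMarkovKernel_Ks [IsMarkovKernel P] [IsProbabilityMeasure ν]
    (hC : MeasurableSet C) (hδ0 : 0 < δ) (hδ1 : δ < 1)
    (hminor : ∀ x ∈ C, ENNReal.ofReal δ • ν ≤ P x) :
    IsMarkovKernel (Ks P ν C δ hC hminor hδ0 hδ1) := by
  refine ⟨fun p => ⟨?_⟩⟩
  show splitKernel P ν C δ p Set.univ = 1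
  rw [splitKernel, splitMeasure_univ hC hδ0.le hδ1.le, splitQ_univ hδ0 hδ1 hminor]

end Q


section Markov

variable {Y : Type*} [MeasurableSpace Y]

lemma lintegral_eval_zero {Pr : Y → Measure (ℕ → Y)}
    (hprob : ∀ y, IsProbabilityMeasure (Pr y)) (h0 : ∀ y, Pr y {ω | ω 0 = y} = 1)
    (y : Y) {f : Y → ℝ≥0∞} (hf : Measurable f) :
    ∫⁻ ω, f (ω 0) ∂ Pr y = f y := by
  haveI := hprob y
  have hS : MeasurableSet {ω : ℕ → Y | f (ω 0) = f y} :=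
    (hf.comp (measurable_pi_apply 0)) (measurableSet_singleton (f y))
  have h1 : Pr y {ω : ℕ → Y | f (ω 0) = f y} = 1 := by
    refine le_antisymm prob_le_one ?_
    refine le_trans (h0 y).ge (measure_mono fun ω hω => ?_)
    simp only [Set.mem_setOf_eq] at hω ⊢
    rw [hω]
  have hae : (fun ω : ℕ → Y => f (ω 0)) =ᵐ[Pr y] fun _ => f y := by
    rw [Filter.EventuallyEq, ae_iff]
    have he : {ω : ℕ → Y | ¬ f (ω 0) = f y} = {ω : ℕ → Y | f (ω 0) = f y}ᶜ := rfl
    rw [he, measure_compl hS (measure_ne_top _ _), h1, measure_univ, tsub_self]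
  rw [lintegral_congr_ae hae, lintegral_const, measure_univ, mul_one]

lemma measurable_snoc_pair {m : ℕ} :
    Measurable fun q : (Fin m → Y) × Y => (Fin.snoc q.1 q.2 : Fin (m + 1) → Y) := by
  apply measurable_pi_lambda
  intro i
  refine Fin.lastCases ?_ ?_ i
  · simp only [Fin.snoc_last]
    exact measurable_snd
  · intro j
    simp only [Fin.snoc_castSucc]
    exact (measurable_pi_apply j).comp measurable_fst

lemma prefix_snoc (ω : ℕ → Y) (n : ℕ) :
    (fun i : Fin (n + 2) => ω i.1)
      = Fin.snoc (fun i : Fin (n + 1) => ω i.1) (ω (n + 1)) := by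
  funext i
  refine Fin.lastCases ?_ ?_ i
  · simp [Fin.snoc_last]
  · intro j
    simp [Fin.snoc_castSucc]

/-- The key consequence of the Markov property: peeling off the last coordinate. -/
lemma markov_step (K : Kernel Y Y) [IsMarkovKernel K]
    (Pr : Y → Measure (ℕ → Y)) (h : IsMarkovFamilyFun (fun y => K y) Pr) (y : Y) (n : ℕ)
    {Φ : (Fin (n + 1) → Y) × Y → ℝ≥0∞} (hΦ : Measurable Φ) :
    ∫⁻ ω, Φ (fun i : Fin (n + 1) => ω i.1, ω (n + 1)) ∂ Pr y
      = ∫⁻ ω, ∫⁻ z, Φ (fun i : Fin (n + 1) => ω i.1, z) ∂ K (ω n) ∂ Pr y := by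
  haveI := h.1 y
  have hpre : Measurable fun (ω : ℕ → Y) (i : Fin (n + 1)) => ω i.1 :=
    measurable_pi_lambda _ fun i => measurable_pi_apply _
  have hT : Measurable fun ω : ℕ → Y => ((fun i : Fin (n + 1) => ω i.1), ω (n + 1)) :=
    hpre.prodMk (measurable_pi_apply _)
  set κ : Kernel (Fin (n + 1) → Y) Y := K.comap (fun p => p (Fin.last n))
    (measurable_pi_apply _) with hκdef
  haveI : IsProbabilityMeasure
      (Measure.map (fun (ω : ℕ → Y) (i : Fin (n + 1)) => ω i.1) (Pr y)) :=
    Measure.isProbabilityMeasure_map hpre.aemeasurable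
  have key : Measure.map (fun ω : ℕ → Y => ((fun i : Fin (n + 1) => ω i.1), ω (n + 1))) (Pr y)
      = (Measure.map (fun (ω : ℕ → Y) (i : Fin (n + 1)) => ω i.1) (Pr y)) ⊗ₘ κ := by
    haveI : IsProbabilityMeasure
        (Measure.map (fun ω : ℕ → Y => ((fun i : Fin (n + 1) => ω i.1), ω (n + 1))) (Pr y)) :=
      Measure.isProbabilityMeasure_map hT.aemeasurable
    refine ext_of_generate_finite _ generateFrom_prod.symm isPiSystem_prod ?_ ?_
    · rintro _ ⟨B, hB, A, hA, rfl⟩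
      simp only [Set.mem_setOf_eq] at hB hA
      have hSm : MeasurableSet {ω : ℕ → Y | (fun i : Fin (n + 1) => ω i.1) ∈ B} := hpre hB
      have hpreA : MeasurableSet ((fun ω : ℕ → Y => ω (n + 1)) ⁻¹' A) :=
        measurable_pi_apply _ hA
      have hmark := h.2.2 y n B hB (A.indicator 1) (measurable_one.indicator hA)
      rw [Measure.map_apply hT (hB.prod hA)]
      have hset : (fun ω : ℕ → Y => ((fun i : Fin (n + 1) => ω i.1), ω (n + 1))) ⁻¹' (B ×ˢ A)
          = {ω : ℕ → Y | (fun i : Fin (n + 1) => ω i.1) ∈ B}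
            ∩ ((fun ω : ℕ → Y => ω (n + 1)) ⁻¹' A) := by
        ext ω; simp [Set.mem_prod]
      rw [hset]
      rw [Measure.compProd_apply_prod hB hA, setLIntegral_map hB (κ.measurable_coe hA) hpre]
      have e1 : ∫⁻ ω in {ω : ℕ → Y | (fun i : Fin (n + 1) => ω i.1) ∈ B},
            A.indicator 1 (ω (n + 1)) ∂ Pr y
          = Pr y ({ω : ℕ → Y | (fun i : Fin (n + 1) => ω i.1) ∈ B}
              ∩ ((fun ω : ℕ → Y => ω (n + 1)) ⁻¹' A)) := by
        rw [lintegral_congr fun ω =>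
          show (A.indicator (1 : Y → ℝ≥0∞) (ω (n + 1)))
              = ((fun ω : ℕ → Y => ω (n + 1)) ⁻¹' A).indicator 1 ω by
            rfl]
        rw [lintegral_indicator hpreA]
        simp only [Pi.one_apply]
        rw [setLIntegral_one, Measure.restrict_apply hpreA,
          Set.inter_comm]
      have e2 : ∫⁻ ω in {ω : ℕ → Y | (fun i : Fin (n + 1) => ω i.1) ∈ B},
            ∫⁻ z, A.indicator 1 z ∂ ((fun x => K x) (ω n)) ∂ Pr y
          = ∫⁻ ω in {ω : ℕ → Y | (fun i : Fin (n + 1) => ω i.1) ∈ B},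
            κ (fun i : Fin (n + 1) => ω i.1) A ∂ Pr y := by
        refine setLIntegral_congr_fun hSm (fun ω _ => ?_)
        rw [lintegral_indicator_one hA]
        rfl
      rw [← e1, hmark]
      exact e2
    · haveI : IsMarkovKernel κ := by rw [hκdef]; infer_instance
      rw [measure_univ, Measure.compProd_apply_univ, measure_univ]
  calc ∫⁻ ω, Φ (fun i : Fin (n + 1) => ω i.1, ω (n + 1)) ∂ Pr y
      = ∫⁻ q, Φ q ∂ Measure.map
          (fun ω : ℕ → Y => ((fun i : Fin (n + 1) => ω i.1), ω (n + 1))) (Pr y) :=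
        (lintegral_map hΦ hT).symm
    _ = ∫⁻ q, Φ q ∂ ((Measure.map (fun (ω : ℕ → Y) (i : Fin (n + 1)) => ω i.1) (Pr y)) ⊗ₘ κ) :=
        by rw [key]
    _ = ∫⁻ p, ∫⁻ z, Φ (p, z) ∂ κ p
          ∂ (Measure.map (fun (ω : ℕ → Y) (i : Fin (n + 1)) => ω i.1) (Pr y)) := by
        haveI : IsMarkovKernel κ := by rw [hκdef]; infer_instance
        exact Measure.lintegral_compProd hΦ
    _ = ∫⁻ ω, ∫⁻ z, Φ (fun i : Fin (n + 1) => ω i.1, z) ∂ κ (fun i : Fin (n + 1) => ω i.1)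
          ∂ Pr y := by
        haveI : IsMarkovKernel κ := by rw [hκdef]; infer_instance
        exact lintegral_map
          (Measurable.lintegral_kernel_prod_right (f := fun p z => Φ (p, z)) hΦ) hpre
    _ = ∫⁻ ω, ∫⁻ z, Φ (fun i : Fin (n + 1) => ω i.1, z) ∂ K (ω n) ∂ Pr y := rfl

end Markov

/-- The main induction: the joint law of the first components of
`(Φ̌_0, …, Φ̌_n)` together with the bell `ι̌_n`, under the split chain started
from `λ*`, is given by the original chain with the bell weights attached at
time `n`. -/
lemma Tprime (P : Kernel X X) [IsMarkovKernel P] (C : Set X) (hC : MeasurableSet C)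
    (ν : Measure X) [IsProbabilityMeasure ν] (δ : ℝ) (hδ0 : 0 < δ) (hδ1 : δ < 1)
    (hminor : ∀ x ∈ C, ENNReal.ofReal δ • ν ≤ P x)
    (Pr : X → Measure (ℕ → X)) (hchain : IsMarkovFamilyFun (fun x => P x) Pr)
    (Prs : X × Bool → Measure (ℕ → X × Bool))
    (hchains : IsMarkovFamilyFun (splitKernel P ν C δ) Prs)
    (μ0 : Measure X) :
    ∀ (n : ℕ) (H : (Fin (n + 1) → X) → Bool → ℝ≥0∞), Measurable (Function.uncurry H) →
      ∫⁻ xs, ∫⁻ ω, H (fun i => (ω i.1).1) (ω n).2 ∂ Prs xs ∂ splitMeasure C δ μ0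
        = ∫⁻ x, ∫⁻ ω, bcomb C δ (fun p => H (fun i => ω i.1) p.2) (ω n) ∂ Pr x ∂ μ0 := by
  intro n
  induction n with
  | zero =>
    intro H hH
    have hgm : Measurable fun p : X × Bool => H (fun _ : Fin 1 => p.1) p.2 :=
      hH.comp ((measurable_pi_lambda _ fun _ => measurable_fst).prodMk measurable_snd)
    have L1 : ∀ xs, ∫⁻ ω, H (fun i : Fin 1 => (ω i.1).1) (ω 0).2 ∂ Prs xs
        = H (fun _ : Fin 1 => xs.1) xs.2 := by
      intro xs
      have e : ∀ ω : ℕ → X × Bool, H (fun i : Fin 1 => (ω i.1).1) (ω 0).2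
          = (fun q : X × Bool => H (fun _ : Fin 1 => q.1) q.2) (ω 0) := by
        intro ω
        have h1 : (fun i : Fin 1 => (ω i.1).1) = fun _ : Fin 1 => (ω 0).1 := by
          funext i
          have h2 : (i : ℕ) = 0 := by omega
          rw [h2]
        rw [h1]
      rw [lintegral_congr e]
      exact lintegral_eval_zero hchains.1 hchains.2.1 xs hgm
    have L2 : ∀ x : X, ∫⁻ ω, bcomb C δ (fun p => H (fun i : Fin 1 => ω i.1) p.2) (ω 0) ∂ Pr x
        = bcomb C δ (fun p : X × Bool => H (fun _ : Fin 1 => p.1) p.2) x := by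
      intro x
      have e : ∀ ω : ℕ → X, bcomb C δ (fun p => H (fun i : Fin 1 => ω i.1) p.2) (ω 0)
          = (fun y : X => bcomb C δ (fun p : X × Bool => H (fun _ : Fin 1 => p.1) p.2) y)
              (ω 0) := by
        intro ω
        have h1 : (fun i : Fin 1 => ω i.1) = fun _ : Fin 1 => ω 0 := by
          funext i
          have h2 : (i : ℕ) = 0 := by omega
          rw [h2]
        rw [h1]
        rfl
      rw [lintegral_congr e]
      exact lintegral_eval_zero hchain.1 hchain.2.1 x (measurable_bcomb hC hgm)
    rw [lintegral_congr L1, lintegral_splitMeasure hC δ μ0 hgm, lintegral_congr L2]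
  | succ n IH =>
    intro H hH
    haveI hKsM := isMarkovKernel_Ks (P := P) (ν := ν) (C := C) (δ := δ) hC hδ0 hδ1 hminor
    haveI hKqM := isMarkovKernel_Kq (P := P) (ν := ν) (C := C) (δ := δ) hC hδ0 hδ1 hminor
    -- measurability facts
    have hfirsts : Measurable fun q : (Fin (n + 1) → X × Bool) × (X × Bool) =>
        (fun i : Fin (n + 1) => (q.1 i).1) :=
      measurable_pi_lambda _ fun i => measurable_fst.comp ((measurable_pi_apply i).comp
        measurable_fst)
    have hPhi : Measurable fun q : (Fin (n + 1) → X × Bool) × (X × Bool) =>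
        H (Fin.snoc (fun i : Fin (n + 1) => (q.1 i).1) q.2.1) q.2.2 :=
      hH.comp ((measurable_snoc_pair.comp (hfirsts.prodMk
        (measurable_fst.comp measurable_snd))).prodMk (measurable_snd.comp measurable_snd))
    have hFF : Measurable (Function.uncurry fun (a : (Fin (n + 1) → X) × Bool)
        (z : X × Bool) => H (Fin.snoc a.1 z.1) z.2) :=
      hH.comp ((measurable_snoc_pair.comp ((measurable_fst.comp measurable_fst).prodMk
        (measurable_fst.comp measurable_snd))).prodMk (measurable_snd.comp measurable_snd))
    have hbc : Measurable fun p : ((Fin (n + 1) → X) × Bool) × X =>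
        bcomb C δ (fun z => H (Fin.snoc p.1.1 z.1) z.2) p.2 :=
      measurable_bcomb_param hC
        (F := fun (a : (Fin (n + 1) → X) × Bool) z => H (Fin.snoc a.1 z.1) z.2) hFF
    have hcm : Measurable fun q : (Fin (n + 1) → X) × Bool => (q.1 (Fin.last n), q.2) :=
      ((measurable_pi_apply _).comp measurable_fst).prodMk measurable_snd
    have hH' : Measurable (Function.uncurry fun (w : Fin (n + 1) → X) (b : Bool) =>
        ∫⁻ y, bcomb C δ (fun z => H (Fin.snoc w z.1) z.2) y
          ∂ splitQ P ν C δ (w (Fin.last n), b)) := by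
      exact Measurable.lintegral_kernel_prod_right
        (κ := (Kq P ν C δ hC hminor).comap
          (fun q : (Fin (n + 1) → X) × Bool => (q.1 (Fin.last n), q.2)) hcm)
        (f := fun (q : (Fin (n + 1) → X) × Bool) (y : X) =>
          bcomb C δ (fun z => H (Fin.snoc q.1 z.1) z.2) y) hbc
    have hPhi2 : Measurable fun q : (Fin (n + 1) → X) × X =>
        bcomb C δ (fun z => H (Fin.snoc q.1 z.1) z.2) q.2 :=
      measurable_bcomb_param hC
        (F := fun (w : Fin (n + 1) → X) (z : X × Bool) => H (Fin.snoc w z.1) z.2)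
        (hH.comp ((measurable_snoc_pair.comp (measurable_fst.prodMk
          (measurable_fst.comp measurable_snd))).prodMk
          (measurable_snd.comp measurable_snd)))
    refine Eq.trans (lintegral_congr fun xs => ?_)
      (Eq.trans (IH (fun w b => ∫⁻ y, bcomb C δ (fun z => H (Fin.snoc w z.1) z.2) y
        ∂ splitQ P ν C δ (w (Fin.last n), b)) hH') ?_)
    · -- split side: peel off the last step
      have s1 := markov_step (Ks P ν C δ hC hminor hδ0 hδ1) Prs hchains xs n
        (Φ := fun q : (Fin (n + 1) → X × Bool) × (X × Bool) =>
          H (Fin.snoc (fun i : Fin (n + 1) => (q.1 i).1) q.2.1) q.2.2) hPhi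
      refine Eq.trans (Eq.trans (lintegral_congr fun ω => ?_) s1)
        (lintegral_congr fun ω => ?_)
      · have harg : (fun i : Fin (n + 2) => (ω i.1).1)
            = (Fin.snoc (fun i : Fin (n + 1) => (ω i.1).1) ((ω (n + 1)).1)
                : Fin (n + 2) → X) := by
          funext i
          refine Fin.lastCases ?_ ?_ i
          · simp
          · intro j; simp
        rw [harg]
      · have hsnoc : Measurable fun z : X × Bool =>
            (Fin.snoc (fun i : Fin (n + 1) => (ω i.1).1) z.1 : Fin (n + 2) → X) :=
          measurable_snoc_pair.comp
            ((measurable_const : Measurable fun _ : X × Bool =>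
              (fun i : Fin (n + 1) => (ω i.1).1)).prodMk measurable_fst)
        have hFz : Measurable fun z : X × Bool =>
            H (Fin.snoc (fun i : Fin (n + 1) => (ω i.1).1) z.1) z.2 :=
          hH.comp (hsnoc.prodMk measurable_snd)
        exact lintegral_splitMeasure hC δ (splitQ P ν C δ (ω n)) hFz
    · -- original side: reassemble the last step
      refine lintegral_congr fun x => ?_
      refine Eq.trans (lintegral_congr fun ω => ?_)
        (Eq.trans (markov_step P Pr hchain x n
          (Φ := fun q : (Fin (n + 1) → X) × X =>
            bcomb C δ (fun z => H (Fin.snoc q.1 z.1) z.2) q.2) hPhi2).symm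
          (lintegral_congr fun ω => ?_))
      · exact bcomb_lintegral_splitQ hδ0 hδ1 hminor
          (fun y => bcomb C δ
            (fun z => H (Fin.snoc (fun i : Fin (n + 1) => ω i.1) z.1) z.2) y) (ω n)
      · have harg2 : (fun i : Fin (n + 2) => ω i.1)
            = (Fin.snoc (fun i : Fin (n + 1) => ω i.1) (ω (n + 1)) : Fin (n + 2) → X) := by
          funext i
          refine Fin.lastCases ?_ ?_ i
          · simp
          · intro j; simp
        rw [harg2]
        rfl

end NummelinAux

/-- the first-component path distribution of the split chain
started from `λ*` coincides with the path distribution of the original chain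
started from `λ`: for every `n ≥ 1` and nonnegative measurable `G_n`,
`∫ E_x[G_n(Φ_1,…,Φ_n)] λ(dx) = ∫ Ě_{xs}[G_n(φ̌_1,…,φ̌_n)] λ*(dxs)`. -/
theorem split_chain_first_component
    (P : Kernel X X) [IsMarkovKernel P]
    (C : Set X) (hC : MeasurableSet C)
    (ν : Measure X) [IsProbabilityMeasure ν] (hνC : ν C = 1)
    (δ : ℝ) (hδ0 : 0 < δ) (hδ : δ < 1 / 2)
    (hminor : ∀ x, ∀ A : Set X, MeasurableSet A →
      ENNReal.ofReal (2 * δ) * C.indicator 1 x * ν A ≤ P x A)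
    (Pr : X → Measure (ℕ → X))
    (hchain : IsMarkovFamilyFun (fun x => P x) Pr)
    (Prs : X × Bool → Measure (ℕ → X × Bool))
    (hchains : IsMarkovFamilyFun (splitKernel P ν C δ) Prs)
    (μ0 : Measure X) :
    ∀ n : ℕ, 1 ≤ n → ∀ G : (Fin n → X) → ENNReal, Measurable G →
      ∫⁻ x, (∫⁻ ω, G (fun i => ω (i.1 + 1)) ∂ Pr x) ∂ μ0
        = ∫⁻ xs, (∫⁻ ω, G (fun i => (ω (i.1 + 1)).1) ∂ Prs xs)
            ∂ splitMeasure C δ μ0 := by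
  intro n hn G hG
  have hδ1 : δ < 1 := by linarith
  have hminor' : ∀ x ∈ C, ENNReal.ofReal δ • ν ≤ P x := by
    intro x hx
    rw [Measure.le_iff]
    intro s hs
    have h := hminor x s hs
    rw [Set.indicator_of_mem hx] at h
    simp only [Pi.one_apply, mul_one] at h
    refine le_trans ?_ h
    rw [Measure.smul_apply, smul_eq_mul]
    gcongr
    linarith
  have hHm : Measurable (Function.uncurry fun (w : Fin (n + 1) → X) (_ : Bool) =>
      G (fun i : Fin n => w i.succ)) :=
    hG.comp (measurable_pi_lambda _ fun i => (measurable_pi_apply _).comp measurable_fst)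
  have T := NummelinAux.Tprime P C hC ν δ hδ0 hδ1 hminor' Pr hchain Prs hchains μ0 n
    (fun w _ => G (fun i : Fin n => w i.succ)) hHm
  refine Eq.trans (lintegral_congr fun x => lintegral_congr fun ω => ?_) T.symm
  exact (NummelinAux.bcomb_const hδ0.le hδ1.le (G fun i => ω (i.1 + 1)) (ω n)).symm
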